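/- There is a constant C > 0 such that for every λ > 0, every t ≥ 0 and every z ≥ 0, the double integral ∫₀^z ∫₀^t e^{−√(λ z' t')} dt' dz' is at most (C/λ)·ln(1 + λ z t). -/

import Mathlib

open Real intervalIntegral MeasureTheory

private lemma zak_cont (c : ℝ) : Continuous fun s : ℝ => Real.exp (-Real.sqrt (c * s)) := by
  fun_prop

private lemma zak_inner_le_t {c t : ℝ} (ht : 0 ≤ t) :
    (∫ s in (0:ℝ)..t, Real.exp (-Real.sqrt (c * s))) ≤ t := by
  calc (∫ s in (0:ℝ)..t, Real.exp (-Real.sqrt (c * s)))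
      ≤ ∫ _ in (0:ℝ)..t, (1:ℝ) := by
        apply intervalIntegral.integral_mono_on ht ((zak_cont c).intervalIntegrable _ _)
          (intervalIntegrable_const)
        intro x _
        calc Real.exp (-Real.sqrt (c * x)) ≤ Real.exp 0 := by
              apply Real.exp_le_exp.2; simp [Real.sqrt_nonneg]
          _ = 1 := Real.exp_zero
    _ = t := by simp

private lemma zak_hasDeriv {c : ℝ} (hc : 0 < c) {s : ℝ} (hs : 0 < s) :
    HasDerivAt (fun u => -(2 / c) * (Real.exp (-Real.sqrt (c * u)) * (1 + Real.sqrt (c * u))))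
      (Real.exp (-Real.sqrt (c * s))) s := by
  have hcs : 0 < c * s := mul_pos hc hs
  have hlin : HasDerivAt (fun u : ℝ => c * u) c s := by
    simpa using (hasDerivAt_id s).const_mul c
  have hv : HasDerivAt (fun u => Real.sqrt (c * u)) (1 / (2 * Real.sqrt (c * s)) * c) s :=
    (Real.hasDerivAt_sqrt hcs.ne').comp s hlin
  have hexp : HasDerivAt (fun u => Real.exp (-Real.sqrt (c * u)))
      (Real.exp (-Real.sqrt (c * s)) * -(1 / (2 * Real.sqrt (c * s)) * c)) s :=
    (Real.hasDerivAt_exp _).comp s hv.neg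
  have hprod := (hexp.mul ((hv.const_add 1))).const_mul (-(2 / c))
  refine hprod.congr_deriv ?_
  have hsq : Real.sqrt (c * s) ≠ 0 := by positivity
  field_simp
  ring_nf

private lemma zak_inner_eval {c t : ℝ} (hc : 0 < c) (ht : 0 ≤ t) :
    (∫ s in (0:ℝ)..t, Real.exp (-Real.sqrt (c * s)))
      = -(2 / c) * (Real.exp (-Real.sqrt (c * t)) * (1 + Real.sqrt (c * t)))
        - -(2 / c) * (Real.exp (-Real.sqrt (c * 0)) * (1 + Real.sqrt (c * 0))) := by
  apply intervalIntegral.integral_eq_sub_of_hasDeriv_right_of_le ht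
  · apply Continuous.continuousOn
    fun_prop
  · intro x hx
    exact (zak_hasDeriv hc hx.1).hasDerivWithinAt
  · exact ((zak_cont c).intervalIntegrable _ _)

private lemma zak_inner_le_two_div {c t : ℝ} (hc : 0 < c) (ht : 0 ≤ t) :
    (∫ s in (0:ℝ)..t, Real.exp (-Real.sqrt (c * s))) ≤ 2 / c := by
  rw [zak_inner_eval hc ht]
  have h1 : 0 ≤ Real.exp (-Real.sqrt (c * t)) * (1 + Real.sqrt (c * t)) := by positivity
  have h2 : (0:ℝ) ≤ 2 / c := by positivity
  simp only [mul_zero, Real.sqrt_zero, add_zero, neg_zero, Real.exp_zero, one_mul, mul_one]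
  nlinarith [mul_nonneg h2 h1]

private lemma zak_log_lb {x : ℝ} (hx : 0 ≤ x) : x / (1 + x) ≤ Real.log (1 + x) := by
  have h1x : (0:ℝ) < 1 + x := by linarith
  rw [Real.le_log_iff_exp_le h1x]
  have hu : x / (1 + x) < 1 := by
    rw [div_lt_one h1x]; linarith
  have h := Real.add_one_le_exp (-(x / (1 + x)))
  have hpos : (0:ℝ) < 1 - x / (1 + x) := by linarith
  have hexppos : (0:ℝ) < Real.exp (-(x / (1 + x))) := Real.exp_pos _
  have : Real.exp (x / (1 + x)) ≤ (1 - x / (1 + x))⁻¹ := by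
    rw [show x / (1 + x) = -(-(x / (1 + x))) by ring, Real.exp_neg]
    exact inv_anti₀ (by linarith) (by linarith)
  have heq : (1 - x / (1 + x))⁻¹ = 1 + x := by
    field_simp; ring
  linarith [heq ▸ this]

theorem zakharov_kernel_integral_log_bound :
    ∃ C : ℝ, 0 < C ∧ ∀ lam t z : ℝ, 0 < lam → 0 ≤ t → 0 ≤ z →
      (∫ z' in (0:ℝ)..z, ∫ t' in (0:ℝ)..t, Real.exp (-Real.sqrt (lam * z' * t')))
        ≤ (C / lam) * Real.log (1 + lam * z * t) := by
  refine ⟨4, by norm_num, fun lam t z hlam ht hz => ?_⟩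
  have hx0 : 0 ≤ lam * z * t := by positivity
  have h1x : (0:ℝ) < 1 + lam * z * t := by linarith
  have hlog0 : 0 ≤ Real.log (1 + lam * z * t) := Real.log_nonneg (by linarith)
  set F := fun z' : ℝ => ∫ t' in (0:ℝ)..t, Real.exp (-Real.sqrt (lam * z' * t')) with hF
  have hcontF : Continuous F := by
    apply intervalIntegral.continuous_parametric_intervalIntegral_of_continuous'
    show Continuous fun p : ℝ × ℝ => Real.exp (-Real.sqrt (lam * p.1 * p.2))
    fun_prop
  have hIntF : ∀ a b : ℝ, IntervalIntegrable F volume a b :=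
    fun a b => hcontF.intervalIntegrable a b
  have hFt : ∀ u : ℝ, F u ≤ t := fun u => zak_inner_le_t ht
  have hconst : ∀ b : ℝ, 0 ≤ b → (∫ u in (0:ℝ)..b, F u) ≤ b * t := by
    intro b hb
    calc (∫ u in (0:ℝ)..b, F u) ≤ ∫ _ in (0:ℝ)..b, t :=
          intervalIntegral.integral_mono_on hb (hIntF 0 b) intervalIntegrable_const
            (fun u _ => hFt u)
      _ = b * t := by simp
  by_cases hcase : lam * z * t ≤ 2
  · -- small case
    have hkey : lam * z * t ≤ 4 * Real.log (1 + lam * z * t) := by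
      have hl := zak_log_lb hx0
      have hl' : lam * z * t ≤ Real.log (1 + lam * z * t) * (1 + lam * z * t) :=
        (div_le_iff₀ h1x).1 hl
      nlinarith [hlog0]
    calc (∫ u in (0:ℝ)..z, F u) ≤ z * t := hconst z hz
      _ ≤ 4 / lam * Real.log (1 + lam * z * t) := by
          rw [div_mul_eq_mul_div, le_div_iff₀ hlam]
          nlinarith [hkey]
  · push_neg at hcase
    have ht0 : 0 < t := by nlinarith [mul_nonneg hlam.le hz]
    have hz0' : 0 < z := by nlinarith [mul_pos hlam ht0]
    set z₀ : ℝ := 2 / (lam * t) with hz₀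
    have hz₀pos : 0 < z₀ := by positivity
    have hz₀lt : z₀ < z := by
      rw [hz₀, div_lt_iff₀ (by positivity)]
      nlinarith
    have hsplit : (∫ u in (0:ℝ)..z, F u)
        = (∫ u in (0:ℝ)..z₀, F u) + ∫ u in z₀..z, F u :=
      (intervalIntegral.integral_add_adjacent_intervals (hIntF 0 z₀) (hIntF z₀ z)).symm
    have hb1 : (∫ u in (0:ℝ)..z₀, F u) ≤ z₀ * t := hconst z₀ hz₀pos.le
    have hzero_not : (0:ℝ) ∉ Set.uIcc z₀ z := by
      rw [Set.uIcc_of_le hz₀lt.le]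
      intro hmem
      exact absurd hmem.1 (by linarith)
    have hintg : IntervalIntegrable (fun u : ℝ => 2 / lam * (1 / u)) volume z₀ z :=
      (intervalIntegrable_one_div (f := fun u : ℝ => u)
        (fun u hu => by rintro rfl; exact hzero_not hu) continuousOn_id).const_mul _
    have hb2 : (∫ u in z₀..z, F u) ≤ 2 / lam * Real.log (z / z₀) := by
      calc (∫ u in z₀..z, F u) ≤ ∫ u in z₀..z, 2 / lam * (1 / u) := by
            apply intervalIntegral.integral_mono_on hz₀lt.le (hIntF z₀ z) hintg
            intro u hu
            have hu0 : 0 < u := lt_of_lt_of_le hz₀pos hu.1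
            have := zak_inner_le_two_div (c := lam * u) (mul_pos hlam hu0) ht
            calc F u ≤ 2 / (lam * u) := this
              _ = 2 / lam * (1 / u) := by rw [mul_one_div, div_div]
        _ = 2 / lam * Real.log (z / z₀) := by
            rw [intervalIntegral.integral_const_mul, integral_one_div hzero_not]
    have hz₀t : z₀ * t = 2 / lam := by
      rw [hz₀]; field_simp
    have hratio : z / z₀ = lam * z * t / 2 := by
      rw [hz₀]; field_simp
    have hlogx : Real.log (lam * z * t / 2) = Real.log (lam * z * t) - Real.log 2 :=
      Real.log_div (by positivity) two_ne_zero
    have hlx : Real.log (lam * z * t) ≤ Real.log (1 + lam * z * t) :=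
      Real.log_le_log (by positivity) (by linarith)
    have hl3 : Real.log 3 ≤ Real.log (1 + lam * z * t) :=
      Real.log_le_log (by norm_num) (by linarith)
    have hl6 : (1:ℝ) ≤ Real.log 6 := by
      rw [← Real.log_exp 1]
      exact Real.log_le_log (Real.exp_pos 1) (by linarith [Real.exp_one_lt_d9])
    have hl6eq : Real.log 6 = Real.log 2 + Real.log 3 := by
      rw [show (6:ℝ) = 2 * 3 by norm_num, Real.log_mul two_ne_zero (by norm_num)]
    have hkey : 2 + 2 * (Real.log (lam * z * t) - Real.log 2)
        ≤ 4 * Real.log (1 + lam * z * t) := by linarith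
    calc (∫ u in (0:ℝ)..z, F u) = (∫ u in (0:ℝ)..z₀, F u) + ∫ u in z₀..z, F u := hsplit
      _ ≤ z₀ * t + 2 / lam * Real.log (z / z₀) := add_le_add hb1 hb2
      _ = 2 / lam + 2 / lam * (Real.log (lam * z * t) - Real.log 2) := by
          rw [hz₀t, hratio, hlogx]
      _ ≤ 4 / lam * Real.log (1 + lam * z * t) := by
          have h' := mul_le_mul_of_nonneg_right hkey (inv_nonneg.2 hlam.le)
          have e1 : 2 / lam + 2 / lam * (Real.log (lam * z * t) - Real.log 2)
              = (2 + 2 * (Real.log (lam * z * t) - Real.log 2)) * lam⁻¹ := by ring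
          have e2 : 4 / lam * Real.log (1 + lam * z * t)
              = 4 * Real.log (1 + lam * z * t) * lam⁻¹ := by ring
          linarith [h', e1.le, e2.ge]
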